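/- Let a ∈ ℝ, let g : [a,∞) → ℂ be bounded and measurable, and let K be a measurable kernel on {(x,y) : a ≤ x ≤ y} with |K(x,y)| ≤ Q(y) for some Q ∈ L¹([a,∞)). Then the Volterra integral equation f(x) = g(x) + ∫_x^∞ K(x,y) f(y) dy has a unique bounded measurable solution f on [a,∞); the solution is obtained by successive iterations, and it satisfies |f(x)| ≤ ‖g‖_∞ exp( ∫_x^∞ Q(y) dy ) for all x ≥ a. -/

import Mathlib

open MeasureTheory Filter Topology

noncomputable section

namespace VolterraAux

variable {a : ℝ} {Q : ℝ → ℝ}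

/-- The tail integral `A x = ∫_{max x a}^∞ Q`. -/
def Aint (a : ℝ) (Q : ℝ → ℝ) (x : ℝ) : ℝ := ∫ y in Set.Ioi (max x a), Q y

lemma Aint_eq {x : ℝ} (hx : a ≤ x) : Aint a Q x = ∫ y in Set.Ioi x, Q y := by
  rw [Aint, max_eq_left hx]

lemma Ioi_max_subset (x : ℝ) : Set.Ioi (max x a) ⊆ Set.Ici a :=
  fun y hy => le_of_lt (lt_of_le_of_lt (le_max_right x a) hy)

lemma Aint_anti (hQ : IntegrableOn Q (Set.Ici a)) (hQ0 : ∀ y, a ≤ y → 0 ≤ Q y) :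
    Antitone (Aint a Q) := by
  intro x x' h
  apply setIntegral_mono_set (hQ.mono_set (Ioi_max_subset x))
  · filter_upwards [ae_restrict_mem measurableSet_Ioi] with y hy
    exact hQ0 y (Ioi_max_subset x hy)
  · exact HasSubset.Subset.eventuallyLE <| Set.Ioi_subset_Ioi (max_le_max h le_rfl)

lemma Aint_meas (hQ : IntegrableOn Q (Set.Ici a)) (hQ0 : ∀ y, a ≤ y → 0 ≤ Q y) :
    Measurable (Aint a Q) := (Aint_anti hQ hQ0).measurable

lemma Aint_nonneg (hQ0 : ∀ y, a ≤ y → 0 ≤ Q y) (x : ℝ) : 0 ≤ Aint a Q x :=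
  setIntegral_nonneg measurableSet_Ioi (fun y hy => hQ0 y (Ioi_max_subset x hy))

lemma Aint_split (hQ : IntegrableOn Q (Set.Ici a)) {x t : ℝ} (hx : a ≤ x) (hxt : x ≤ t) :
    Aint a Q x = (∫ y in Set.Ioc x t, Q y) + Aint a Q t := by
  rw [Aint_eq hx, Aint_eq (hx.trans hxt),
    ← setIntegral_union Set.Ioc_disjoint_Ioi_same measurableSet_Ioi
      (hQ.mono_set (Set.Ioc_subset_Icc_self.trans (Set.Icc_subset_Ici_self.trans
        (Set.Ici_subset_Ici.mpr hx))))
      (hQ.mono_set (Set.Ioi_subset_Ici (hx.trans hxt))),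
    Set.Ioc_union_Ioi_eq_Ioi hxt]

lemma Ioi_subset_Ici' {x : ℝ} (hx : a ≤ x) : Set.Ioi x ⊆ Set.Ici a :=
  Set.Ioi_subset_Ici_self.trans (Set.Ici_subset_Ici.mpr hx)

lemma intQA (hQ : IntegrableOn Q (Set.Ici a)) (hQ0 : ∀ y, a ≤ y → 0 ≤ Q y)
    (n : ℕ) {x : ℝ} (hx : a ≤ x) :
    IntegrableOn (fun y => Q y * Aint a Q y ^ n) (Set.Ioi x) := by
  have hsub := Ioi_subset_Ici' hx
  apply Integrable.mono' ((hQ.mono_set hsub).mul_const (Aint a Q a ^ n))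
  · exact (hQ.mono_set hsub).1.mul (((Aint_meas hQ hQ0).pow_const n).aestronglyMeasurable)
  · filter_upwards [ae_restrict_mem measurableSet_Ioi] with y hy
    have hay : a ≤ y := hsub hy
    have h1 : 0 ≤ Q y := hQ0 y hay
    have h2 : 0 ≤ Aint a Q y := Aint_nonneg hQ0 y
    have h3 : Aint a Q y ≤ Aint a Q a := Aint_anti hQ hQ0 hay
    rw [Real.norm_eq_abs, abs_of_nonneg (mul_nonneg h1 (pow_nonneg h2 n))]
    exact mul_le_mul_of_nonneg_left (pow_le_pow_left₀ h2 h3 n) h1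

lemma T_eq (hQ : IntegrableOn Q (Set.Ici a)) (hQ0 : ∀ y, a ≤ y → 0 ≤ Q y) :
    ∀ (n : ℕ) {x : ℝ}, a ≤ x →
      ∫ y in Set.Ioi x, Q y * Aint a Q y ^ n = Aint a Q x ^ (n + 1) / (n + 1) := by
  intro n
  induction n with
  | zero =>
    intro x hx
    simp [Aint_eq hx]
  | succ n ih =>
    intro x hx
    set A := Aint a Q with hA
    have hsub := Ioi_subset_Ici' hx
    have hAanti := Aint_anti hQ hQ0
    have hAmeas := Aint_meas hQ hQ0
    have hAnn := Aint_nonneg hQ0 (Q := Q)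
    -- the kernel of the Fubini argument
    set H : ℝ → ℝ → ℝ := fun y z => Set.indicator (Set.Iic y)
      (fun z => (Q y * A y ^ n) * Q z) z with hH
    have hprodae : ∀ᵐ p ∂((volume.restrict (Set.Ioi x)).prod (volume.restrict (Set.Ioi x))),
        p ∈ (Set.Ioi x) ×ˢ (Set.Ioi x) := by
      rw [Measure.prod_restrict]
      exact ae_restrict_mem (measurableSet_Ioi.prod measurableSet_Ioi)
    have hQae : AEStronglyMeasurable Q (volume.restrict (Set.Ioi x)) := (hQ.mono_set hsub).1
    have hHmeas : AEStronglyMeasurable (Function.uncurry H)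
        ((volume.restrict (Set.Ioi x)).prod (volume.restrict (Set.Ioi x))) := by
      have : Function.uncurry H = Set.indicator {p : ℝ × ℝ | p.2 ≤ p.1}
          (fun p => (Q p.1 * A p.1 ^ n) * Q p.2) := by
        funext p
        simp [Function.uncurry, hH, Set.indicator_apply]
      rw [this]
      apply AEStronglyMeasurable.indicator _ (measurableSet_le measurable_snd measurable_fst)
      exact (hQae.comp_fst.mul ((hAmeas.pow_const n).comp measurable_fst).aestronglyMeasurable).mul
        hQae.comp_snd
    have hHint : Integrable (Function.uncurry H)
        ((volume.restrict (Set.Ioi x)).prod (volume.restrict (Set.Ioi x))) := by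
      apply Integrable.mono' (g := fun p : ℝ × ℝ => (A a ^ n) * (Q p.1 * Q p.2))
        (((hQ.mono_set hsub).mul_prod (hQ.mono_set hsub)).const_mul _) hHmeas
      filter_upwards [hprodae] with p hp
      have h1 : 0 ≤ Q p.1 := hQ0 _ (hsub hp.1)
      have h2 : 0 ≤ Q p.2 := hQ0 _ (hsub hp.2)
      have h3 : 0 ≤ A p.1 := hAnn p.1
      have h4 : A p.1 ≤ A a := hAanti (hsub hp.1)
      by_cases hle : p.2 ≤ p.1
      · rw [Function.uncurry, hH]
        simp only [Set.indicator_of_mem (Set.mem_Iic.mpr hle)]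
        rw [Real.norm_eq_abs, abs_of_nonneg (mul_nonneg (mul_nonneg h1 (pow_nonneg h3 n)) h2)]
        calc Q p.1 * A p.1 ^ n * Q p.2 ≤ Q p.1 * A a ^ n * Q p.2 := by
              apply mul_le_mul_of_nonneg_right _ h2
              exact mul_le_mul_of_nonneg_left (pow_le_pow_left₀ h3 h4 n) h1
          _ = A a ^ n * (Q p.1 * Q p.2) := by ring
      · rw [Function.uncurry, hH]
        simp only [Set.indicator_of_notMem (fun h => hle (Set.mem_Iic.mp h))]
        simp only [norm_zero]
        exact mul_nonneg (pow_nonneg (hAnn a) n) (mul_nonneg h1 h2)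
    have swap : ∫ y in Set.Ioi x, ∫ z in Set.Ioi x, H y z = ∫ z in Set.Ioi x, ∫ y in Set.Ioi x, H y z :=
      integral_integral_swap hHint
    -- identify the left side of `swap`
    have lhs_id : ∫ y in Set.Ioi x, ∫ z in Set.Ioi x, H y z
        = ∫ y in Set.Ioi x, (Q y * A y ^ n) * (A x - A y) := by
      apply setIntegral_congr_fun measurableSet_Ioi
      intro y hy
      have hxy : x ≤ y := le_of_lt hy
      calc ∫ z in Set.Ioi x, H y z
          = ∫ z in Set.Ioi x ∩ Set.Iic y, (Q y * A y ^ n) * Q z := by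
            rw [hH]; exact setIntegral_indicator measurableSet_Iic
        _ = ∫ z in Set.Ioc x y, (Q y * A y ^ n) * Q z := by rw [Set.Ioi_inter_Iic]
        _ = (Q y * A y ^ n) * ∫ z in Set.Ioc x y, Q z := integral_const_mul _ _
        _ = (Q y * A y ^ n) * (A x - A y) := by
            have := Aint_split hQ hx hxy
            rw [← hA] at this
            rw [eq_sub_of_add_eq (by linarith : (∫ z in Set.Ioc x y, Q z) + A y = A x)]
    -- identify the right side of `swap`
    have rhs_id : ∫ z in Set.Ioi x, ∫ y in Set.Ioi x, H y z
        = ∫ z in Set.Ioi x, (A z ^ (n + 1) / (n + 1)) * Q z := by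
      apply setIntegral_congr_fun measurableSet_Ioi
      intro z hz
      have haz : a ≤ z := hsub hz
      calc ∫ y in Set.Ioi x, H y z
          = ∫ y in Set.Ioi x, Set.indicator (Set.Ici z) (fun y => (Q y * A y ^ n) * Q z) y := by
            apply setIntegral_congr_fun measurableSet_Ioi
            intro y _
            simp [hH, Set.indicator_apply]
        _ = ∫ y in Set.Ioi x ∩ Set.Ici z, (Q y * A y ^ n) * Q z :=
            setIntegral_indicator measurableSet_Ici
        _ = ∫ y in Set.Ici z, (Q y * A y ^ n) * Q z := by
            have hss : Set.Ioi x ∩ Set.Ici z = Set.Ici z :=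
              Set.inter_eq_self_of_subset_right (fun y hy => Set.mem_Ioi.mpr (lt_of_lt_of_le hz hy))
            rw [hss]
        _ = ∫ y in Set.Ioi z, (Q y * A y ^ n) * Q z := integral_Ici_eq_integral_Ioi
        _ = (∫ y in Set.Ioi z, Q y * A y ^ n) * Q z := integral_mul_const _ _
        _ = (A z ^ (n + 1) / (n + 1)) * Q z := by rw [ih haz]
    -- assemble
    have e1 : ∫ y in Set.Ioi x, (Q y * A y ^ n) * A x = (A x ^ (n + 1) / (n + 1)) * A x := by
      rw [integral_mul_const, ih hx]
    have int_high := intQA hQ hQ0 (n + 1) hx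
    have int_mix : IntegrableOn (fun y => (Q y * A y ^ n) * (A x - A y)) (Set.Ioi x) := by
      apply Integrable.mono' ((hQ.mono_set hsub).mul_const (A a ^ n * A a))
      · exact (hQae.mul ((hAmeas.pow_const n).aestronglyMeasurable)).mul
          ((measurable_const.sub hAmeas).aestronglyMeasurable)
      · filter_upwards [ae_restrict_mem measurableSet_Ioi] with y hy
        have hay : a ≤ y := hsub hy
        have h1 : 0 ≤ Q y := hQ0 y hay
        have h2 : 0 ≤ A y := hAnn y
        have h3 : A y ≤ A x := hAanti (le_of_lt hy)
        have h4 : A x ≤ A a := hAanti hx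
        rw [Real.norm_eq_abs, abs_of_nonneg (mul_nonneg (mul_nonneg h1 (pow_nonneg h2 n))
          (by linarith))]
        have h5 : A y ^ n ≤ A a ^ n := pow_le_pow_left₀ h2 (h3.trans h4) n
        have h6 : A x - A y ≤ A a := by linarith
        calc Q y * A y ^ n * (A x - A y) ≤ Q y * A a ^ n * A a := by
              apply mul_le_mul (mul_le_mul_of_nonneg_left h5 h1) h6 (by linarith)
              exact mul_nonneg h1 (pow_nonneg ((hAnn a).trans le_rfl) n)
          _ = Q y * (A a ^ n * A a) := by ring
    have e2 : ∫ y in Set.Ioi x, (Q y * A y ^ n) * A x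
        = (∫ y in Set.Ioi x, Q y * A y ^ (n + 1)) + ∫ y in Set.Ioi x, (Q y * A y ^ n) * (A x - A y) := by
      have : ∀ y : ℝ, (Q y * A y ^ n) * A x
          = Q y * A y ^ (n + 1) + (Q y * A y ^ n) * (A x - A y) := fun y => by ring
      simp_rw [this]
      exact integral_add int_high int_mix
    have e3 : ∫ y in Set.Ioi x, (Q y * A y ^ n) * (A x - A y)
        = (∫ y in Set.Ioi x, Q y * A y ^ (n + 1)) / (n + 1) := by
      rw [← lhs_id, swap, rhs_id]
      have : ∀ z ∈ Set.Ioi x, (A z ^ (n + 1) / (n + 1)) * Q z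
          = (Q z * A z ^ (n + 1)) / ((n : ℝ) + 1) := fun z _ => by ring
      rw [setIntegral_congr_fun measurableSet_Ioi this, integral_div]
    set T := ∫ y in Set.Ioi x, Q y * A y ^ (n + 1) with hT
    have hc : (0:ℝ) < (n : ℝ) + 1 := by positivity
    have e4 : A x ^ (n + 1) / ((n : ℝ) + 1) * A x = T + T / ((n : ℝ) + 1) := by
      rw [← e1, e2, e3]
    have goal' : T = A x ^ (n + 1 + 1) / ((n : ℝ) + 1 + 1) := by
      have hx1 : A x ^ (n + 1 + 1) = A x ^ (n + 1) * A x := by ring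
      rw [hx1]
      field_simp at e4 ⊢
      linarith
    rw [goal']
    push_cast
    ring

end VolterraAux

set_option maxHeartbeats 1000000 in
/-- Volterra integral equation lemma: if `g` is bounded and measurable on `[a,∞)` and the
kernel `K` satisfies `|K(x,y)| ≤ Q(y)` on `{a ≤ x ≤ y}` with `Q ∈ L¹([a,∞))`, then
`f(x) = g(x) + ∫_x^∞ K(x,y) f(y) dy` has a unique bounded measurable solution `f` on
`[a,∞)`, and `|f(x)| ≤ ‖g‖_∞ exp(∫_x^∞ Q(y) dy)`. -/
theorem volterra_integral_equation
    (a : ℝ) (g : ℝ → ℂ) (K : ℝ → ℝ → ℂ) (Q : ℝ → ℝ)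
    (hgm : Measurable g) (hgb : ∃ M : ℝ, ∀ x : ℝ, a ≤ x → ‖g x‖ ≤ M)
    (hKm : Measurable (fun p : ℝ × ℝ => K p.1 p.2))
    (hKQb : ∀ x y : ℝ, a ≤ x → x ≤ y → ‖K x y‖ ≤ Q y)
    (hQ : IntegrableOn Q (Set.Ici a)) :
    ∃ f : ℝ → ℂ,
      Measurable f ∧ (∃ M : ℝ, ∀ x : ℝ, a ≤ x → ‖f x‖ ≤ M) ∧
      (∀ x : ℝ, a ≤ x → f x = g x + ∫ y in Set.Ioi x, K x y * f y) ∧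
      (∀ x : ℝ, a ≤ x →
        ‖f x‖ ≤ (⨆ t : Set.Ici a, ‖g (t : ℝ)‖) * Real.exp (∫ y in Set.Ioi x, Q y)) ∧
      (∀ h : ℝ → ℂ, Measurable h → (∃ M : ℝ, ∀ x : ℝ, a ≤ x → ‖h x‖ ≤ M) →
        (∀ x : ℝ, a ≤ x → h x = g x + ∫ y in Set.Ioi x, K x y * h y) →
        ∀ x : ℝ, a ≤ x → h x = f x) := by
  classical
  obtain ⟨M, hM⟩ := hgb
  have hQ0 : ∀ y, a ≤ y → 0 ≤ Q y := fun y hy => (norm_nonneg (K a y)).trans (hKQb a y le_rfl hy)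
  set A := VolterraAux.Aint a Q with hA
  have hAeq : ∀ {x : ℝ}, a ≤ x → (∫ y in Set.Ioi x, Q y) = A x :=
    fun {x} hx => (VolterraAux.Aint_eq hx).symm
  have hAanti : Antitone A := VolterraAux.Aint_anti hQ hQ0
  have hAmeas : Measurable A := VolterraAux.Aint_meas hQ hQ0
  have hAnn : ∀ x, 0 ≤ A x := VolterraAux.Aint_nonneg hQ0
  have hT : ∀ (n : ℕ) {x : ℝ}, a ≤ x →
      ∫ y in Set.Ioi x, Q y * A y ^ n = A x ^ (n + 1) / (n + 1) :=
    fun n {x} hx => VolterraAux.T_eq hQ hQ0 n hx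
  have hintQA : ∀ (n : ℕ) {x : ℝ}, a ≤ x →
      IntegrableOn (fun y => Q y * A y ^ n) (Set.Ioi x) :=
    fun n {x} hx => VolterraAux.intQA hQ hQ0 n hx
  set Mg := ⨆ t : Set.Ici a, ‖g (t : ℝ)‖ with hMgdef
  have hbdd : BddAbove (Set.range fun t : Set.Ici a => ‖g (t : ℝ)‖) :=
    ⟨M, by rintro _ ⟨t, rfl⟩; exact hM t t.2⟩
  have hMg_ge : ∀ x : ℝ, a ≤ x → ‖g x‖ ≤ Mg := fun x hx => le_ciSup hbdd ⟨x, hx⟩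
  have hMg0 : 0 ≤ Mg := (norm_nonneg (g a)).trans (hMg_ge a le_rfl)
  -- Picard iterates
  set u : ℕ → ℝ → ℂ := fun n => Nat.rec (fun x => if a ≤ x then g x else 0)
    (fun _ v x => if a ≤ x then ∫ y in Set.Ioi x, K x y * v y else 0) n with hu
  have hu0 : ∀ x, u 0 x = if a ≤ x then g x else 0 := fun _ => rfl
  have huS : ∀ n x, u (n + 1) x = if a ≤ x then ∫ y in Set.Ioi x, K x y * u n y else 0 :=
    fun _ _ => rfl
  have hum : ∀ n, Measurable (u n) := by
    intro n
    induction n with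
    | zero => exact Measurable.ite measurableSet_Ici hgm measurable_const
    | succ n ih =>
      apply Measurable.ite measurableSet_Ici _ measurable_const
      have heq : (fun x => ∫ y in Set.Ioi x, K x y * u n y)
          = fun x => ∫ y, Set.indicator {p : ℝ × ℝ | p.1 < p.2}
              (fun p => K p.1 p.2 * u n p.2) (x, y) := by
        funext x
        rw [← integral_indicator measurableSet_Ioi]
        refine integral_congr_ae (Filter.Eventually.of_forall fun y => ?_)
        simp [Set.indicator_apply, Set.mem_Ioi]
      rw [heq]
      apply StronglyMeasurable.measurable
      apply MeasureTheory.StronglyMeasurable.integral_prod_right'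
        (f := Set.indicator {p : ℝ × ℝ | p.1 < p.2} (fun p => K p.1 p.2 * u n p.2))
      apply Measurable.stronglyMeasurable
      exact (hKm.mul (ih.comp measurable_snd)).indicator
        (measurableSet_lt measurable_fst measurable_snd)
  -- the bound on the iterates
  have hub : ∀ n, ∀ x : ℝ, a ≤ x → ‖u n x‖ ≤ Mg * A x ^ n / n.factorial := by
    intro n
    induction n with
    | zero =>
      intro x hx
      rw [hu0, if_pos hx]
      simpa using hMg_ge x hx
    | succ n ih =>
      intro x hx
      have hsub := VolterraAux.Ioi_subset_Ici' hx
      rw [huS, if_pos hx]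
      have hbound_ae : ∀ᵐ y ∂(volume.restrict (Set.Ioi x)),
          ‖K x y * u n y‖ ≤ (Mg / n.factorial) * (Q y * A y ^ n) := by
        filter_upwards [ae_restrict_mem measurableSet_Ioi] with y hy
        have hay : a ≤ y := hsub hy
        rw [norm_mul]
        calc ‖K x y‖ * ‖u n y‖ ≤ Q y * (Mg * A y ^ n / n.factorial) := by
              apply mul_le_mul (hKQb x y hx (le_of_lt hy)) (ih y hay) (norm_nonneg _)
                (hQ0 y hay)
          _ = (Mg / n.factorial) * (Q y * A y ^ n) := by ring
      calc ‖∫ y in Set.Ioi x, K x y * u n y‖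
          ≤ ∫ y in Set.Ioi x, (Mg / n.factorial) * (Q y * A y ^ n) :=
            norm_integral_le_of_norm_le ((hintQA n hx).const_mul _) hbound_ae
        _ = (Mg / n.factorial) * (A x ^ (n + 1) / (n + 1)) := by
            rw [integral_const_mul, hT n hx]
        _ = Mg * A x ^ (n + 1) / (n + 1).factorial := by
            rw [Nat.factorial_succ]
            push_cast
            have h1 : (n.factorial : ℝ) ≠ 0 := by positivity
            field_simp
  -- integrability of the integrands
  have hKmul_meas : ∀ (v : ℝ → ℂ), Measurable v → ∀ x : ℝ,
      AEStronglyMeasurable (fun y => K x y * v y) (volume.restrict (Set.Ioi x)) := by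
    intro v hv x
    exact ((hKm.comp (measurable_const.prodMk measurable_id)).mul hv).aestronglyMeasurable
  have hKuint : ∀ (n : ℕ) {x : ℝ}, a ≤ x →
      IntegrableOn (fun y => K x y * u n y) (Set.Ioi x) := by
    intro n x hx
    have hsub := VolterraAux.Ioi_subset_Ici' hx
    apply Integrable.mono' (((hQ.mono_set hsub).mul_const (Mg * A a ^ n / n.factorial)))
      (hKmul_meas (u n) (hum n) x)
    filter_upwards [ae_restrict_mem measurableSet_Ioi] with y hy
    have hay : a ≤ y := hsub hy
    rw [norm_mul]
    calc ‖K x y‖ * ‖u n y‖ ≤ Q y * (Mg * A y ^ n / n.factorial) :=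
          mul_le_mul (hKQb x y hx (le_of_lt hy)) (hub n y hay) (norm_nonneg _) (hQ0 y hay)
      _ ≤ Q y * (Mg * A a ^ n / n.factorial) := by
          have h1 : A y ^ n ≤ A a ^ n := pow_le_pow_left₀ (hAnn y) (hAanti hay) n
          have h2 : (0:ℝ) ≤ Q y := hQ0 y hay
          gcongr
  -- summability of the series of iterates
  have hsum_bound : ∀ x : ℝ, Summable fun n : ℕ => Mg * A x ^ n / n.factorial := by
    intro x
    have : (fun n : ℕ => Mg * A x ^ n / n.factorial)
        = fun n : ℕ => Mg * (A x ^ n / n.factorial) := by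
      funext n; ring
    rw [this]
    exact (Real.summable_pow_div_factorial (A x)).mul_left Mg
  have hsum : ∀ x : ℝ, Summable fun n => u n x := by
    intro x
    by_cases hx : a ≤ x
    · exact Summable.of_norm_bounded (hsum_bound x) (fun n => hub n x hx)
    · have hz : ∀ n, u n x = 0 := by
        intro n
        cases n with
        | zero => rw [hu0, if_neg hx]
        | succ n => rw [huS, if_neg hx]
      exact summable_zero.congr (fun n => (hz n).symm)
  set f : ℝ → ℂ := fun x => ∑' n, u n x with hf
  have hfm : Measurable f := by
    apply measurable_of_tendsto_metrizable
      (f := fun N x => ∑ n ∈ Finset.range N, u n x)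
      (fun N => Finset.measurable_sum _ (fun n _ => hum n))
    rw [tendsto_pi_nhds]
    exact fun x => (hsum x).hasSum.tendsto_sum_nat
  have hnorm_sum : ∀ x : ℝ, a ≤ x → Summable fun n => ‖u n x‖ := fun x hx =>
    Summable.of_nonneg_of_le (fun n => norm_nonneg _) (fun n => hub n x hx) (hsum_bound x)
  -- the exponential series identity
  have hexp : ∀ x : ℝ, (∑' n : ℕ, Mg * A x ^ n / n.factorial) = Mg * Real.exp (A x) := by
    intro x
    have h1 : (fun n : ℕ => Mg * A x ^ n / n.factorial)
        = fun n : ℕ => Mg * (A x ^ n / n.factorial) := by funext n; ring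
    rw [h1, (Real.summable_pow_div_factorial (A x)).tsum_mul_left Mg]
    congr 1
    rw [Real.exp_eq_exp_ℝ, NormedSpace.exp_eq_tsum_div]
  -- pointwise exponential bound for f
  have hfb : ∀ x : ℝ, a ≤ x → ‖f x‖ ≤ Mg * Real.exp (A x) := by
    intro x hx
    calc ‖f x‖ ≤ ∑' n, ‖u n x‖ := norm_tsum_le_tsum_norm (hnorm_sum x hx)
      _ ≤ ∑' n, Mg * A x ^ n / n.factorial :=
          Summable.tsum_le_tsum (fun n => hub n x hx) (hnorm_sum x hx) (hsum_bound x)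
      _ = Mg * Real.exp (A x) := hexp x
  -- global bound
  have hfB : ∀ x : ℝ, a ≤ x → ‖f x‖ ≤ Mg * Real.exp (A a) := by
    intro x hx
    refine (hfb x hx).trans ?_
    exact mul_le_mul_of_nonneg_left (Real.exp_le_exp.mpr (hAanti hx)) hMg0
  -- the integral equation
  have heqf : ∀ x : ℝ, a ≤ x → f x = g x + ∫ y in Set.Ioi x, K x y * f y := by
    intro x hx
    have hsub := VolterraAux.Ioi_subset_Ici' hx
    have h1 : f x = u 0 x + ∑' n, u (n + 1) x := Summable.tsum_eq_zero_add (hsum x)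
    have h2 : ∀ n : ℕ, u (n + 1) x = ∫ y in Set.Ioi x, K x y * u n y :=
      fun n => by rw [huS, if_pos hx]
    have hIle : ∀ n : ℕ, ∫ y in Set.Ioi x, ‖K x y * u n y‖
        ≤ Mg * A x ^ (n + 1) / (n + 1).factorial := by
      intro n
      have hae : ∀ᵐ y ∂(volume.restrict (Set.Ioi x)),
          ‖K x y * u n y‖ ≤ (Mg / n.factorial) * (Q y * A y ^ n) := by
        filter_upwards [ae_restrict_mem measurableSet_Ioi] with y hy
        have hay : a ≤ y := hsub hy
        rw [norm_mul]
        calc ‖K x y‖ * ‖u n y‖ ≤ Q y * (Mg * A y ^ n / n.factorial) :=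
              mul_le_mul (hKQb x y hx (le_of_lt hy)) (hub n y hay) (norm_nonneg _) (hQ0 y hay)
          _ = (Mg / n.factorial) * (Q y * A y ^ n) := by ring
      calc ∫ y in Set.Ioi x, ‖K x y * u n y‖
          ≤ ∫ y in Set.Ioi x, (Mg / n.factorial) * (Q y * A y ^ n) :=
            integral_mono_ae (hKuint n hx).norm ((hintQA n hx).const_mul _) hae
        _ = (Mg / n.factorial) * (A x ^ (n + 1) / (n + 1)) := by
            rw [integral_const_mul, hT n hx]
        _ = Mg * A x ^ (n + 1) / (n + 1).factorial := by
            rw [Nat.factorial_succ]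
            push_cast
            have h1 : (n.factorial : ℝ) ≠ 0 := by positivity
            field_simp
    have hSnorm : Summable fun n : ℕ => ∫ y in Set.Ioi x, ‖K x y * u n y‖ := by
      apply Summable.of_nonneg_of_le
        (fun n => integral_nonneg (fun y => norm_nonneg _)) hIle
      have := (summable_nat_add_iff (f := fun n : ℕ => Mg * A x ^ n / n.factorial) 1).mpr
        (hsum_bound x)
      exact this
    have h3 : ∑' n, ∫ y in Set.Ioi x, K x y * u n y
        = ∫ y in Set.Ioi x, ∑' n, K x y * u n y :=
      integral_tsum_of_summable_integral_norm (fun n => hKuint n hx) hSnorm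
    have h4 : ∀ y : ℝ, (∑' n, K x y * u n y) = K x y * f y := fun y => tsum_mul_left
    rw [h1, hu0, if_pos hx]
    congr 1
    calc ∑' n, u (n + 1) x = ∑' n, ∫ y in Set.Ioi x, K x y * u n y := by
          exact tsum_congr h2
      _ = ∫ y in Set.Ioi x, ∑' n, K x y * u n y := h3
      _ = ∫ y in Set.Ioi x, K x y * f y := by
          exact setIntegral_congr_fun measurableSet_Ioi (fun y _ => h4 y)
  -- uniqueness
  have huniq : ∀ h : ℝ → ℂ, Measurable h → (∃ Mh : ℝ, ∀ x : ℝ, a ≤ x → ‖h x‖ ≤ Mh) →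
      (∀ x : ℝ, a ≤ x → h x = g x + ∫ y in Set.Ioi x, K x y * h y) →
      ∀ x : ℝ, a ≤ x → h x = f x := by
    intro h hm hbM heqh
    obtain ⟨Mh, hMh⟩ := hbM
    set C : ℝ := Mh + Mg * Real.exp (A a) with hC
    have hdb : ∀ x : ℝ, a ≤ x → ‖h x - f x‖ ≤ C := by
      intro x hx
      calc ‖h x - f x‖ ≤ ‖h x‖ + ‖f x‖ := norm_sub_le _ _
        _ ≤ Mh + Mg * Real.exp (A a) := add_le_add (hMh x hx) (hfB x hx)
    have hKvint : ∀ (v : ℝ → ℂ) (Mv : ℝ), Measurable v → (∀ y, a ≤ y → ‖v y‖ ≤ Mv) →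
        ∀ {x : ℝ}, a ≤ x → IntegrableOn (fun y => K x y * v y) (Set.Ioi x) := by
      intro v Mv hv hvb x hx
      have hsub := VolterraAux.Ioi_subset_Ici' hx
      apply Integrable.mono' ((hQ.mono_set hsub).mul_const Mv) (hKmul_meas v hv x)
      filter_upwards [ae_restrict_mem measurableSet_Ioi] with y hy
      have hay : a ≤ y := hsub hy
      rw [norm_mul]
      exact mul_le_mul (hKQb x y hx (le_of_lt hy)) (hvb y hay) (norm_nonneg _) (hQ0 y hay)
    have hKh_int : ∀ {x : ℝ}, a ≤ x → IntegrableOn (fun y => K x y * h y) (Set.Ioi x) :=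
      fun {x} hx => hKvint h Mh hm hMh hx
    have hKf_int : ∀ {x : ℝ}, a ≤ x → IntegrableOn (fun y => K x y * f y) (Set.Ioi x) :=
      fun {x} hx => hKvint f (Mg * Real.exp (A a)) hfm hfB hx
    have hdmeas : Measurable (fun y => h y - f y) := hm.sub hfm
    have hdB : ∀ y, a ≤ y → ‖h y - f y‖ ≤ C := hdb
    have hKd_int : ∀ {x : ℝ}, a ≤ x →
        IntegrableOn (fun y => K x y * (h y - f y)) (Set.Ioi x) :=
      fun {x} hx => hKvint (fun y => h y - f y) C hdmeas hdB hx
    have hdeq : ∀ x : ℝ, a ≤ x →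
        h x - f x = ∫ y in Set.Ioi x, K x y * (h y - f y) := by
      intro x hx
      rw [heqh x hx, heqf x hx]
      have : ∀ y : ℝ, K x y * (h y - f y) = K x y * h y - K x y * f y :=
        fun y => by ring
      rw [show (fun y => K x y * (h y - f y)) = fun y => K x y * h y - K x y * f y from
        funext this] -- may need care
      rw [integral_sub (hKh_int hx) (hKf_int hx)]
      ring
    have hind : ∀ n : ℕ, ∀ x : ℝ, a ≤ x → ‖h x - f x‖ ≤ C * A x ^ n / n.factorial := by
      intro n
      induction n with
      | zero => intro x hx; simpa using hdb x hx
      | succ n ih =>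
        intro x hx
        have hsub := VolterraAux.Ioi_subset_Ici' hx
        rw [hdeq x hx]
        have hae : ∀ᵐ y ∂(volume.restrict (Set.Ioi x)),
            ‖K x y * (h y - f y)‖ ≤ (C / n.factorial) * (Q y * A y ^ n) := by
          filter_upwards [ae_restrict_mem measurableSet_Ioi] with y hy
          have hay : a ≤ y := hsub hy
          rw [norm_mul]
          calc ‖K x y‖ * ‖h y - f y‖ ≤ Q y * (C * A y ^ n / n.factorial) :=
                mul_le_mul (hKQb x y hx (le_of_lt hy)) (ih y hay) (norm_nonneg _) (hQ0 y hay)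
            _ = (C / n.factorial) * (Q y * A y ^ n) := by ring
        calc ‖∫ y in Set.Ioi x, K x y * (h y - f y)‖
            ≤ ∫ y in Set.Ioi x, (C / n.factorial) * (Q y * A y ^ n) :=
              norm_integral_le_of_norm_le ((hintQA n hx).const_mul _) hae
          _ = (C / n.factorial) * (A x ^ (n + 1) / (n + 1)) := by
              rw [integral_const_mul, hT n hx]
          _ = C * A x ^ (n + 1) / (n + 1).factorial := by
              rw [Nat.factorial_succ]
              push_cast
              have h1 : (n.factorial : ℝ) ≠ 0 := by positivity
              field_simp
    intro x hx
    have hlim : Tendsto (fun n : ℕ => C * A x ^ n / n.factorial) atTop (𝓝 0) := by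
      have h1 : (fun n : ℕ => C * A x ^ n / n.factorial)
          = fun n : ℕ => C * (A x ^ n / n.factorial) := by funext n; ring
      rw [h1]
      have := (Real.summable_pow_div_factorial (A x)).tendsto_atTop_zero.const_mul C
      simpa using this
    have hle0 : ‖h x - f x‖ ≤ 0 :=
      le_of_tendsto_of_tendsto' tendsto_const_nhds hlim (fun n => hind n x hx)
    have : h x - f x = 0 := norm_le_zero_iff.mp hle0
    exact sub_eq_zero.mp this
  -- conclusion
  refine ⟨f, hfm, ⟨Mg * Real.exp (A a), hfB⟩, heqf, ?_, huniq⟩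
  intro x hx
  rw [hAeq hx]
  exact hfb x hx
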